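/- Let f be convex with f(1) = 0 and f strictly convex at 1, and P a probability on {0, M} with P(Z = M) = p ∈ (0,1). Define the binary divergence h_f(q; p) = p f(q/p) + (1−p) f((1−q)/(1−p)). Then q ↦ h_f(q; p) is strictly increasing and continuous on [p, q_max] (where finite), so for each ρ > 0 there is a unique q(p) = sup{q ≥ p : h_f(q; p) ≤ ρ}, and the worst-case risk of Z equals M·q(p). -/

import Mathlib

/-- On the two-point space Z ∈ {0, M} with P(Z = M) = p ∈ (0,1): for f convex
with f(1) = 0, continuous, and strictly convex at 1, the binary divergence
h_f(q; p) = p f(q/p) + (1−p) f((1−q)/(1−p)) is strictly increasing and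
continuous in q on [p, 1], so q(p) = sup{q ≥ p : h_f(q; p) ≤ ρ} is
well-defined, and the worst-case risk sup{qM : h_f(q; p) ≤ ρ} equals M·q(p). -/
theorem binary_divergence_risk (f : ℝ → ℝ)
    (hf : ConvexOn ℝ (Set.Ici 0) f) (hfc : ContinuousOn f (Set.Ici 0))
    (hf1 : f 1 = 0)
    (hstrict : ∀ t0 t1 l : ℝ, 0 ≤ t0 → t0 < 1 → 1 < t1 → 0 < l → l < 1 →
      f (l * t0 + (1 - l) * t1) < l * f t0 + (1 - l) * f t1)
    (M p ρ : ℝ) (hM : 0 < M) (hp : 0 < p) (hp1 : p < 1) (hρ : 0 < ρ) :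
    StrictMonoOn
      (fun q => p * f (q / p) + (1 - p) * f ((1 - q) / (1 - p)))
      (Set.Icc p 1) ∧
    ContinuousOn
      (fun q => p * f (q / p) + (1 - p) * f ((1 - q) / (1 - p)))
      (Set.Icc p 1) ∧
    sSup {r : ℝ | ∃ q : ℝ, 0 ≤ q ∧ q ≤ 1 ∧
        p * f (q / p) + (1 - p) * f ((1 - q) / (1 - p)) ≤ ρ ∧ r = q * M} =
      (sSup {q : ℝ | p ≤ q ∧ q ≤ 1 ∧
        p * f (q / p) + (1 - p) * f ((1 - q) / (1 - p)) ≤ ρ}) * M := by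
  have h1p : (0:ℝ) < 1 - p := by linarith
  set h : ℝ → ℝ := fun q => p * f (q / p) + (1 - p) * f ((1 - q) / (1 - p)) with hh
  have hhp : h p = 0 := by
    simp only [hh, div_self hp.ne', div_self h1p.ne', hf1]
    ring
  -- positivity of h on (p,1]
  have hpos : ∀ q, p < q → q ≤ 1 → 0 < h q := by
    intro q hpq hq1
    have ht0 : (0:ℝ) ≤ (1 - q) / (1 - p) := div_nonneg (by linarith) h1p.le
    have ht0' : (1 - q) / (1 - p) < 1 := by
      rw [div_lt_one h1p]; linarith
    have ht1 : 1 < q / p := by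
      rw [lt_div_iff₀ hp]; linarith
    have := hstrict ((1 - q) / (1 - p)) (q / p) (1 - p) ht0 ht0' ht1 h1p (by linarith)
    have heq : (1 - p) * ((1 - q) / (1 - p)) + (1 - (1 - p)) * (q / p) = 1 := by
      field_simp
      ring
    rw [heq, hf1] at this
    simp only [hh]
    nlinarith [this]
  -- strict monotonicity
  have hmono : StrictMonoOn h (Set.Icc p 1) := by
    intro q1 hq1 q2 hq2 hlt
    rcases eq_or_lt_of_le hq1.1 with heq | hpq1
    · rw [← heq, hhp]
      exact hpos q2 (heq ▸ hlt) hq2.2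
    · set l : ℝ := (q2 - q1) / (q2 - p) with hl
      have hq2p : (0:ℝ) < q2 - p := by linarith
      have hl0 : 0 < l := div_pos (by linarith) hq2p
      have hl1 : l < 1 := by
        rw [hl, div_lt_one hq2p]; linarith
      have hx1 : q1 / p = l * 1 + (1 - l) * (q2 / p) := by
        rw [hl]
        field_simp [hp.ne', hq2p.ne']
        ring
      have hx2 : (1 - q1) / (1 - p) = l * 1 + (1 - l) * ((1 - q2) / (1 - p)) := by
        rw [hl]
        field_simp [h1p.ne', hq2p.ne']
        ring
      have hmem1 : (1:ℝ) ∈ Set.Ici (0:ℝ) := by norm_num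
      have hmem2 : q2 / p ∈ Set.Ici (0:ℝ) := div_nonneg (by linarith [hq2.1]) hp.le
      have hmem3 : (1 - q2) / (1 - p) ∈ Set.Ici (0:ℝ) :=
        div_nonneg (by linarith [hq2.2]) h1p.le
      have hc1 := hf.2 hmem1 hmem2 hl0.le (by linarith : (0:ℝ) ≤ 1 - l) (by ring)
      have hc2 := hf.2 hmem1 hmem3 hl0.le (by linarith : (0:ℝ) ≤ 1 - l) (by ring)
      simp only [smul_eq_mul] at hc1 hc2
      rw [← hx1, hf1] at hc1
      rw [← hx2, hf1] at hc2
      have hq2pos : 0 < h q2 := hpos q2 (lt_trans hpq1 hlt) hq2.2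
      have : h q1 ≤ (1 - l) * h q2 := by
        simp only [hh]
        nlinarith [hc1, hc2]
      nlinarith
  refine ⟨hmono, ?_, ?_⟩
  -- continuity
  · have c1 : ContinuousOn (fun q : ℝ => f (q / p)) (Set.Icc p 1) := by
      apply hfc.comp ((continuous_id.div_const p).continuousOn)
      intro q hq
      simp only [id_eq, Set.mem_Ici]
      exact div_nonneg (by linarith [hq.1]) hp.le
    have c2 : ContinuousOn (fun q : ℝ => f ((1 - q) / (1 - p))) (Set.Icc p 1) := by
      apply hfc.comp (((continuous_const.sub continuous_id).div_const (1 - p)).continuousOn)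
      intro q hq
      simp only [id_eq, Set.mem_Ici]
      exact div_nonneg (by show (0:ℝ) ≤ 1 - q; linarith [hq.2]) h1p.le
    exact (continuousOn_const.mul c1).add (continuousOn_const.mul c2)
  -- sSup equality
  · set S : Set ℝ := {q : ℝ | p ≤ q ∧ q ≤ 1 ∧ h q ≤ ρ} with hS
    set T : Set ℝ := {r : ℝ | ∃ q : ℝ, 0 ≤ q ∧ q ≤ 1 ∧ h q ≤ ρ ∧ r = q * M} with hT
    have hpS : p ∈ S := ⟨le_refl p, hp1.le, by rw [hhp]; exact hρ.le⟩
    have hSne : S.Nonempty := ⟨p, hpS⟩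
    have hSbdd : BddAbove S := ⟨1, fun q hq => hq.2.1⟩
    have hTne : T.Nonempty := ⟨p * M, p, hp.le, hp1.le, by rw [hhp]; exact hρ.le, rfl⟩
    have hTbdd : BddAbove T := by
      refine ⟨M, ?_⟩
      rintro r ⟨q, hq0, hq1, _, rfl⟩
      nlinarith
    have hpleS : p ≤ sSup S := le_csSup hSbdd hpS
    apply le_antisymm
    · apply csSup_le hTne
      rintro r ⟨q, hq0, hq1, hqρ, rfl⟩
      rcases le_or_gt q p with hqp | hqp
      · calc q * M ≤ p * M := by nlinarith
          _ ≤ sSup S * M := by nlinarith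
      · have hqS : q ∈ S := ⟨hqp.le, hq1, hqρ⟩
        have := le_csSup hSbdd hqS
        nlinarith
    · rw [← le_div_iff₀ hM]
      apply csSup_le hSne
      intro q hq
      rw [le_div_iff₀ hM]
      exact le_csSup hTbdd ⟨q, le_trans hp.le hq.1, hq.2.1, hq.2.2, rfl⟩
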